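/- Let k ≥ 1 and let T_{2,k} be the balanced binary tree with k levels (every non-leaf vertex has exactly two children, all leaves at the same distance k−1 from the root, so #V(T_{2,k}) = 2^k − 1). Then π(T_{2,k}) = (2^k + (-1)^{k-1})/3, the (k−1)-th Jacobsthal number, and moreover this minimum is attained by a set consisting only of leaves, i.e., π_leaf(T_{2,k}) = π(T_{2,k}). -/

import Mathlib

/-- The propagation closure: `PropReach G S v` means vertex `v` eventually receives the
information when the process starts from the set `S` on the graph `G`.  A vertex `w` can be
added whenever some vertex `v` already having the information is adjacent to `w` and every
neighbour of `v` other than `w` already has the information. -/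
inductive PropReach {V : Type*} (G : SimpleGraph V) (S : Set V) : V → Prop
  | base {v : V} (hv : v ∈ S) : PropReach G S v
  | step {v w : V} (hv : PropReach G S v) (hadj : G.Adj v w)
      (hall : ∀ x : V, G.Adj v x → x ≠ w → PropReach G S x) : PropReach G S w

/-- `S ↷ G` : the set `S` propagates to (all of) the graph `G`. -/
def Propagates {V : Type*} (G : SimpleGraph V) (S : Set V) : Prop :=
  ∀ v : V, PropReach G S v

/-- `π(G)`: the minimum cardinality of a set of vertices propagating to `G`. -/
noncomputable def propNum {V : Type*} (G : SimpleGraph V) : ℕ :=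
  sInf {n : ℕ | ∃ S : Set V, S.ncard = n ∧ Propagates G S}

/-- The balanced `m`-ary tree of depth `d`: vertices are words over an alphabet of
size `m` of length at most `d` (the root is the empty word), and each vertex `l` of
length `< d` is adjacent to its `m` children `x :: l`. -/
def BalancedTree (m d : ℕ) : SimpleGraph {l : List (Fin m) // l.length ≤ d} where
  Adj a b := (∃ x : Fin m, (a : List (Fin m)) = x :: (b : List (Fin m))) ∨
             (∃ x : Fin m, (b : List (Fin m)) = x :: (a : List (Fin m)))
  symm := ⟨fun a b h => h.symm⟩
  loopless := ⟨by
    rintro a (⟨x, hx⟩ | ⟨x, hx⟩) <;> simpa using congrArg List.length hx⟩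

namespace BBaux

lemma PropReach.mono {V : Type*} {G : SimpleGraph V} {S S' : Set V} (h : S ⊆ S') {v : V}
    (hv : PropReach G S v) : PropReach G S' v := by
  induction hv with
  | base hv => exact PropReach.base (h hv)
  | step hv hadj hall ih ihall => exact PropReach.step ih hadj ihall

lemma PropReach.graft {V : Type*} {G : SimpleGraph V} {S S' : Set V}
    (h : ∀ s ∈ S, PropReach G S' s) {v : V}
    (hv : PropReach G S v) : PropReach G S' v := by
  induction hv with
  | base hv => exact h _ hv
  | step hv hadj hall ih ihall => exact PropReach.step ih hadj ihall

variable {D : ℕ}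

abbrev Vt (D : ℕ) := {l : List (Fin 2) // l.length ≤ D}

instance : Finite (Vt D) :=
  Set.Finite.to_subtype (List.finite_length_le (Fin 2) D)

/-- The subtree rooted at `l0` (vertices having `l0` as a suffix). -/
def Sub (l0 : Vt D) : Set (Vt D) := {v | l0.1 <:+ v.1}

lemma self_mem_Sub (l0 : Vt D) : l0 ∈ Sub l0 := List.suffix_refl _

lemma Sub_subset {l0 c : Vt D} (h : l0.1 <:+ c.1) : Sub c ⊆ Sub l0 :=
  fun _ hv => h.trans hv

lemma mem_Sub_cases {l0 v : Vt D} (h : v ∈ Sub l0) :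
    v = l0 ∨ ∃ x : Fin 2, (x :: l0.1) <:+ v.1 := by
  obtain ⟨w, hw⟩ := h
  rcases w.eq_nil_or_concat with rfl | ⟨ws, y, rfl⟩
  · left; exact Subtype.ext hw.symm
  · right; exact ⟨y, ⟨ws, by simpa using hw⟩⟩

lemma suffix_unique {v : Vt D} {s t : List (Fin 2)} (hs : s <:+ v.1) (ht : t <:+ v.1)
    (hlen : s.length = t.length) : s = t := by
  obtain ⟨ws, hws⟩ := hs
  obtain ⟨wt, hwt⟩ := ht
  have h := hws.trans hwt.symm
  exact List.append_inj_right h (by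
    have := congrArg List.length h
    simp at this
    omega)

lemma Sub_disjoint {l0 : Vt D} {c0 c1 : Vt D} {x0 x1 : Fin 2} (hc0 : c0.1 = x0 :: l0.1)
    (hc1 : c1.1 = x1 :: l0.1) (hx : x0 ≠ x1) : Disjoint (Sub c0) (Sub c1) := by
  rw [Set.disjoint_left]
  intro v h0 h1
  have := suffix_unique (D := D) (v := v) (h0 : c0.1 <:+ v.1) (h1 : c1.1 <:+ v.1)
    (by simp [hc0, hc1])
  rw [hc0, hc1] at this
  exact hx (by injection this)

lemma root_not_mem_child_Sub {l0 c : Vt D} {x : Fin 2} (hc : c.1 = x :: l0.1) :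
    l0 ∉ Sub c := by
  intro h
  have := h.length_le
  simp [hc] at this

/-- The child of `l0` labelled `x`. -/
def chld (x : Fin 2) (l0 : Vt D) (h : l0.1.length < D) : Vt D := ⟨x :: l0.1, by simpa using h⟩

/-- The parent of `l0` (itself for the root). -/
def par (l0 : Vt D) : Vt D := ⟨l0.1.tail, le_trans (by rw [List.length_tail]; exact Nat.sub_le _ _) l0.2⟩

/-! ### The three sequences -/

def seqBC : ℕ → ℕ × ℕ
  | 0 => (0, 1)
  | j + 1 => ((seqBC j).2 + (seqBC j).1, ((seqBC j).1 + 1) + (seqBC j).1)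

def cB (j : ℕ) : ℕ := (seqBC j).1
def cC (j : ℕ) : ℕ := (seqBC j).2
def cW (j : ℕ) : ℕ := cB j + 1

lemma cB_zero : cB 0 = 0 := rfl
lemma cC_zero : cC 0 = 1 := rfl
lemma cW_zero : cW 0 = 1 := rfl
lemma cB_succ (j : ℕ) : cB (j + 1) = cC j + cB j := rfl
lemma cC_succ (j : ℕ) : cC (j + 1) = cW j + cB j := rfl
lemma cW_succ (j : ℕ) : cW (j + 1) = cW j + cC j := by
  simp [cW, cB_succ, cC_succ]; omega

lemma cB_le_cC (j : ℕ) : cB j ≤ cC j ∧ cC j ≤ cB j + 1 := by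
  induction j with
  | zero => simp [cB_zero, cC_zero]
  | succ j ih => rw [cB_succ, cC_succ, cW]; omega

lemma seq_closed (j : ℕ) :
    3 * (cC j : ℤ) = 2 ^ (j + 1) + (-1) ^ j ∧
    6 * (cB j : ℤ) = 2 ^ (j + 2) - 3 - (-1) ^ j := by
  induction j with
  | zero => norm_num [cB_zero, cC_zero]
  | succ j ih =>
    obtain ⟨h1, h2⟩ := ih
    constructor
    · rw [cC_succ, cW]; push_cast
      simp only [pow_succ] at h1 h2 ⊢; linarith
    · rw [cB_succ]; push_cast
      simp only [pow_succ] at h1 h2 ⊢; linarith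

end BBaux

namespace BBaux

variable {D : ℕ}

local notation "G" => BalancedTree 2 D

lemma fin2_cases (x : Fin 2) : x = 0 ∨ x = 1 := by omega

lemma child_suffix {l0 c : Vt D} {x : Fin 2} (hc : c.1 = x :: l0.1) : l0.1 <:+ c.1 :=
  ⟨[x], by simp [hc]⟩

lemma nbr_mem_Sub {c v w : Vt D} (hv : v ∈ Sub c) (hne : v ≠ c)
    (hadj : (BalancedTree 2 D).Adj v w) : w ∈ Sub c := by
  obtain (rfl | ⟨x, hx⟩) := mem_Sub_cases hv
  · exact absurd rfl hne
  rcases hadj with ⟨y, hy⟩ | ⟨y, hy⟩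
  · rw [hy] at hx
    rcases List.suffix_cons_iff.mp hx with h | h
    · have h2 : c.1 = w.1 := by injection h with _ h
      show c.1 <:+ w.1
      rw [h2]
    · exact (List.suffix_cons x c.1).trans h
  · exact hv.trans ⟨[y], by simp [hy]⟩

lemma parent_not_mem_Sub {l0 w : Vt D} {y : Fin 2} (hy : l0.1 = y :: w.1) : w ∉ Sub l0 := by
  intro h
  have := h.length_le
  rw [hy] at this
  simp at this

/-- A neighbour of `l0` lying in the subtree of a child `c` of `l0` is `c` itself. -/
lemma adj_root_mem_child {l0 c w : Vt D} {x : Fin 2} (hc : c.1 = x :: l0.1)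
    (hadj : (BalancedTree 2 D).Adj l0 w) (hw : w ∈ Sub c) : w = c := by
  rcases hadj with ⟨y, hy⟩ | ⟨y, hy⟩
  · exact absurd (Sub_subset (child_suffix hc) hw) (parent_not_mem_Sub hy)
  · have h2 : c.1 = w.1 :=
      suffix_unique (v := w) hw (List.suffix_refl _) (by simp [hc, hy])
    exact Subtype.ext h2.symm

/-! ### Fort types -/

def goodAt (F : Set (Vt D)) (v : Vt D) : Prop :=
  ∀ w, (BalancedTree 2 D).Adj v w → w ∈ F →
    ∃ w', (BalancedTree 2 D).Adj v w' ∧ w' ∈ F ∧ w' ≠ w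

def typeA (l0 : Vt D) (F : Set (Vt D)) : Prop :=
  F ⊆ Sub l0 ∧ F.Nonempty ∧ l0 ∉ F ∧ (∀ w, (BalancedTree 2 D).Adj l0 w → w ∉ F) ∧
    ∀ v ∈ Sub l0, v ∉ F → goodAt F v

def typeB (l0 : Vt D) (F : Set (Vt D)) : Prop :=
  F ⊆ Sub l0 ∧ l0 ∈ F ∧ ∀ v ∈ Sub l0, v ∉ F → goodAt F v

def typeD (l0 : Vt D) (F : Set (Vt D)) : Prop :=
  F ⊆ Sub l0 ∧ l0 ∉ F ∧ (∀ x : Fin 2, ∃ c ∈ F, c.1 = x :: l0.1) ∧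
    ∀ v ∈ Sub l0, v ∉ F → goodAt F v

def typeC (l0 : Vt D) (F : Set (Vt D)) : Prop :=
  F ⊆ Sub l0 ∧ l0 ∉ F ∧ (∃ c ∈ F, ∃ x : Fin 2, c.1 = x :: l0.1) ∧
    ∀ v ∈ Sub l0, v ≠ l0 → v ∉ F → goodAt F v

lemma typeD_typeC {l0 : Vt D} {F : Set (Vt D)} (h : typeD l0 F) : typeC l0 F := by
  obtain ⟨h1, h2, h3, h4⟩ := h
  obtain ⟨c, hc, hc'⟩ := h3 0
  exact ⟨h1, h2, ⟨c, hc, 0, hc'⟩, fun v hv _ h' => h4 v hv h'⟩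

/-- Propagation never enters a fort disjoint from the starting set. -/
lemma reach_not_mem_fort {S F : Set (Vt D)} (hdisj : ∀ v ∈ F, v ∉ S)
    (hgood : ∀ v, v ∉ F → goodAt F v) :
    ∀ v, PropReach (BalancedTree 2 D) S v → v ∉ F := by
  intro v hv
  induction hv with
  | base hv => exact fun hF => hdisj _ hF hv
  | @step v w hv hadj hall ih ihall =>
    intro hwF
    obtain ⟨w', hadj', hw'F, hw'ne⟩ := hgood v ih w hadj hwF
    exact ihall w' hadj' hw'ne hw'F

end BBaux

namespace BBaux

variable {D : ℕ}

lemma adj_down {l0 c : Vt D} {x : Fin 2} (hc : c.1 = x :: l0.1) :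
    (BalancedTree 2 D).Adj l0 c := Or.inr ⟨x, hc⟩

lemma adj_up {l0 c : Vt D} {x : Fin 2} (hc : c.1 = x :: l0.1) :
    (BalancedTree 2 D).Adj c l0 := Or.inl ⟨x, hc⟩

lemma ne_of_mem_child_Sub {l0 c v : Vt D} {x : Fin 2} (hc : c.1 = x :: l0.1)
    (hv : v ∈ Sub c) : v ≠ l0 := fun h => root_not_mem_child_Sub hc (h ▸ hv)

lemma eq_root_of_not_child {l0 c0 c1 v : Vt D} (hc0 : c0.1 = (0 : Fin 2) :: l0.1)
    (hc1 : c1.1 = (1 : Fin 2) :: l0.1) (hv : v ∈ Sub l0)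
    (h0 : v ∉ Sub c0) (h1 : v ∉ Sub c1) : v = l0 := by
  rcases mem_Sub_cases hv with rfl | ⟨x, hx⟩
  · rfl
  · rcases fin2_cases x with rfl | rfl
    · exact absurd (show v ∈ Sub c0 from by rw [Sub, Set.mem_setOf_eq, hc0]; exact hx) h0
    · exact absurd (show v ∈ Sub c1 from by rw [Sub, Set.mem_setOf_eq, hc1]; exact hx) h1

lemma goodAt_union_inner {c v : Vt D} {F Fbig : Set (Vt D)} (hsub : F ⊆ Fbig)
    (hv : v ∈ Sub c) (hne : v ≠ c) (hcap : ∀ w ∈ Fbig, w ∈ Sub c → w ∈ F)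
    (h : goodAt F v) : goodAt Fbig v := by
  intro w hadj hw
  obtain ⟨w', a, b, cne⟩ := h w hadj (hcap w hw (nbr_mem_Sub hv hne hadj))
  exact ⟨w', a, hsub b, cne⟩

lemma goodAt_outside' {l0 c v : Vt D} {x : Fin 2} (hc : c.1 = x :: l0.1) {F : Set (Vt D)}
    (hF : F ⊆ Sub c) (hv : v ∉ Sub c) (hvne : v ≠ l0) : goodAt F v := by
  intro w hadj hw
  have hwc : w ∈ Sub c := hF hw
  by_cases hwceq : w = c
  · subst hwceq
    rcases hadj with ⟨y, hy⟩ | ⟨y, hy⟩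
    · exact absurd (show v ∈ Sub w from ⟨[y], by simp [hy]⟩) hv
    · rw [hc] at hy
      exact absurd (Subtype.ext (by injection hy with _ h; exact h.symm) : v = l0) hvne
  · exact absurd (nbr_mem_Sub hwc hwceq hadj.symm) hv

/-- Lifting: an A- or D-fort of a child is an A-fort of the parent. -/
lemma lift_AD_A {l0 c : Vt D} {x : Fin 2} (hc : c.1 = x :: l0.1) {F : Set (Vt D)}
    (h : typeA c F ∨ typeD c F) : typeA l0 F := by
  obtain ⟨hF, hcF, hne, hcond⟩ :
      F ⊆ Sub c ∧ c ∉ F ∧ F.Nonempty ∧ (∀ v ∈ Sub c, v ∉ F → goodAt F v) := by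
    rcases h with ⟨h1, h2, h3, _, h5⟩ | ⟨h1, h3, hch, h5⟩
    · exact ⟨h1, h3, h2, h5⟩
    · obtain ⟨z, hz, _⟩ := hch 0
      exact ⟨h1, h3, ⟨z, hz⟩, h5⟩
  have hnonbr : ∀ w, (BalancedTree 2 D).Adj l0 w → w ∉ F := by
    intro w hadj hw
    exact hcF ((adj_root_mem_child hc hadj (hF hw)) ▸ hw)
  refine ⟨hF.trans (Sub_subset (child_suffix hc)), hne,
    fun hl0 => root_not_mem_child_Sub hc (hF hl0), hnonbr, ?_⟩
  intro v hv hvF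
  by_cases hvc : v ∈ Sub c
  · exact hcond v hvc hvF
  · by_cases hvl : v = l0
    · subst hvl
      exact fun w hadj hw => absurd hw (hnonbr w hadj)
    · exact goodAt_outside' hc hF hvc hvl

/-- Lifting: B-forts of both children give a D-fort of the parent. -/
lemma lift_BB_D {l0 c0 c1 : Vt D} (hc0 : c0.1 = (0 : Fin 2) :: l0.1)
    (hc1 : c1.1 = (1 : Fin 2) :: l0.1) {F0 F1 : Set (Vt D)}
    (h0 : typeB c0 F0) (h1 : typeB c1 F1) : typeD l0 (F0 ∪ F1) := by
  obtain ⟨hF0, hc0F, hcond0⟩ := h0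
  obtain ⟨hF1, hc1F, hcond1⟩ := h1
  have hdis := Sub_disjoint hc0 hc1 (by decide)
  have hc01 : c0 ≠ c1 := by
    intro h
    rw [Subtype.ext_iff, hc0, hc1] at h
    simpa using h
  refine ⟨Set.union_subset (hF0.trans (Sub_subset (child_suffix hc0)))
      (hF1.trans (Sub_subset (child_suffix hc1))), ?_, ?_, ?_⟩
  · rintro (h | h)
    · exact root_not_mem_child_Sub hc0 (hF0 h)
    · exact root_not_mem_child_Sub hc1 (hF1 h)
  · intro x
    rcases fin2_cases x with rfl | rfl
    · exact ⟨c0, Or.inl hc0F, hc0⟩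
    · exact ⟨c1, Or.inr hc1F, hc1⟩
  · intro v hv hvF
    by_cases hv0 : v ∈ Sub c0
    · have hvnec0 : v ≠ c0 := fun h => hvF (Or.inl (h ▸ hc0F))
      refine goodAt_union_inner Set.subset_union_left hv0 hvnec0 ?_
        (hcond0 v hv0 (fun h => hvF (Or.inl h)))
      rintro w (hw | hw) hwc
      · exact hw
      · exact absurd hwc (Set.disjoint_right.mp hdis (hF1 hw))
    · by_cases hv1 : v ∈ Sub c1
      · have hvnec1 : v ≠ c1 := fun h => hvF (Or.inr (h ▸ hc1F))
        refine goodAt_union_inner Set.subset_union_right hv1 hvnec1 ?_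
          (hcond1 v hv1 (fun h => hvF (Or.inr h)))
        rintro w (hw | hw) hwc
        · exact absurd hwc (Set.disjoint_left.mp hdis (hF0 hw))
        · exact hw
      · have hvl : v = l0 := eq_root_of_not_child hc0 hc1 hv hv0 hv1
        subst hvl
        rintro w hadj (hw | hw)
        · have : w = c0 := adj_root_mem_child hc0 hadj (hF0 hw)
          subst this
          exact ⟨c1, adj_down hc1, Or.inr hc1F, hc01.symm⟩
        · have : w = c1 := adj_root_mem_child hc1 hadj (hF1 hw)
          subst this
          exact ⟨c0, adj_down hc0, Or.inl hc0F, hc01⟩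

/-- Lifting: a B-fort of a child is a C-fort of the parent. -/
lemma lift_B_C {l0 c : Vt D} {x : Fin 2} (hc : c.1 = x :: l0.1) {F : Set (Vt D)}
    (h : typeB c F) : typeC l0 F := by
  obtain ⟨hF, hcF, hcond⟩ := h
  refine ⟨hF.trans (Sub_subset (child_suffix hc)),
    fun hl => root_not_mem_child_Sub hc (hF hl), ⟨c, hcF, x, hc⟩, ?_⟩
  intro v hv hvne hvF
  by_cases hvc : v ∈ Sub c
  · exact hcond v hvc hvF
  · exact goodAt_outside' hc hF hvc hvne

/-- One-sided work-horse for `lift_B`. -/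
lemma lift_B_side {l0 ca cb : Vt D} {xa xb : Fin 2} (hca : ca.1 = xa :: l0.1)
    (hcb : cb.1 = xb :: l0.1) (hxab : xa ≠ xb) {Fa Fb : Set (Vt D)}
    (hFa : Fa ⊆ Sub ca) (hFb : Fb ⊆ Sub cb)
    (conda : ∀ v ∈ Sub ca, v ≠ ca → v ∉ Fa → goodAt Fa v)
    (roota : ca ∈ Fa ∨ ∃ z ∈ Fa, ∃ y : Fin 2, z.1 = y :: ca.1) :
    ∀ v ∈ Sub ca, v ∉ insert l0 (Fa ∪ Fb) → goodAt (insert l0 (Fa ∪ Fb)) v := by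
  have hdis := Sub_disjoint hca hcb hxab
  intro v hv hvF
  have hcap : ∀ w ∈ insert l0 (Fa ∪ Fb), w ∈ Sub ca → w ∈ Fa := by
    rintro w (rfl | hw | hw) hwc
    · exact absurd hwc (root_not_mem_child_Sub hca)
    · exact hw
    · exact absurd hwc (Set.disjoint_right.mp hdis (hFb hw))
  by_cases hvc : v = ca
  · rw [hvc] at hvF ⊢
    have hcaFa : ca ∉ Fa := fun h => hvF (Set.mem_insert_of_mem _ (Or.inl h))
    rcases roota with h | ⟨z, hz, y, hzy⟩
    · exact absurd h hcaFa
    intro w hadj hw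
    rcases Set.mem_insert_iff.mp hw with rfl | hw'
    · -- w = l0 : use the grandchild z
      refine ⟨z, adj_down hzy, Set.mem_insert_of_mem _ (Or.inl hz), ?_⟩
      exact ne_of_mem_child_Sub hca (show z ∈ Sub ca from ⟨[y], by simp [hzy]⟩)
    · -- w ∈ Fa ∪ Fb : it lies in `Sub ca`, use the parent l0
      have hwFa : w ∈ Fa := by
        rcases hw' with hw' | hw'
        · exact hw'
        · -- w ∈ Fb adjacent to ca : impossible
          exfalso
          have hwb : w ∈ Sub cb := hFb hw'
          rcases hadj with ⟨y', hy'⟩ | ⟨y', hy'⟩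
          · -- ca.1 = y' :: w.1, so w = l0
            rw [hca] at hy'
            have : w = l0 := Subtype.ext (by injection hy' with _ h; exact h.symm)
            exact root_not_mem_child_Sub hcb (this ▸ hwb)
          · -- w.1 = y' :: ca.1, so w ∈ Sub ca
            exact Set.disjoint_left.mp hdis (show w ∈ Sub ca from ⟨[y'], by simp [hy']⟩) hwb
      refine ⟨l0, adj_up hca, Set.mem_insert _ _, ?_⟩
      exact fun h => root_not_mem_child_Sub hca (h ▸ hFa hwFa)
  · exact goodAt_union_inner (Set.subset_union_left.trans (Set.subset_insert _ _)) hv hvc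
      hcap (conda v hv hvc (fun h => hvF (Set.mem_insert_of_mem _ (Or.inl h))))

/-- Lifting: (B or C)-forts of both children plus the root give a B-fort of the parent. -/
lemma lift_B {l0 c0 c1 : Vt D} (hc0 : c0.1 = (0 : Fin 2) :: l0.1)
    (hc1 : c1.1 = (1 : Fin 2) :: l0.1) {F0 F1 : Set (Vt D)}
    (h0 : typeB c0 F0 ∨ typeC c0 F0) (h1 : typeB c1 F1 ∨ typeC c1 F1) :
    typeB l0 (insert l0 (F0 ∪ F1)) := by
  have ext : ∀ {c : Vt D} {x : Fin 2} (_ : c.1 = x :: l0.1) {F : Set (Vt D)},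
      typeB c F ∨ typeC c F →
      F ⊆ Sub c ∧ (∀ v ∈ Sub c, v ≠ c → v ∉ F → goodAt F v) ∧
        (c ∈ F ∨ ∃ z ∈ F, ∃ y : Fin 2, z.1 = y :: c.1) := by
    rintro c x hc F (⟨h1, h2, h3⟩ | ⟨h1, h2, ⟨z, hz, y, hzy⟩, h4⟩)
    · exact ⟨h1, fun v hv _ => h3 v hv, Or.inl h2⟩
    · exact ⟨h1, h4, Or.inr ⟨z, hz, y, hzy⟩⟩
  obtain ⟨hF0, cond0, root0⟩ := ext hc0 h0
  obtain ⟨hF1, cond1, root1⟩ := ext hc1 h1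
  refine ⟨?_, Set.mem_insert _ _, ?_⟩
  · refine Set.insert_subset (self_mem_Sub l0) (Set.union_subset ?_ ?_)
    · exact hF0.trans (Sub_subset (child_suffix hc0))
    · exact hF1.trans (Sub_subset (child_suffix hc1))
  · intro v hv hvF
    by_cases hv0 : v ∈ Sub c0
    · exact lift_B_side hc0 hc1 (by decide) hF0 hF1 cond0 root0 v hv0 hvF
    · by_cases hv1 : v ∈ Sub c1
      · have := lift_B_side hc1 hc0 (by decide) hF1 hF0 cond1 root1 v hv1
        rw [Set.union_comm] at this
        exact this hvF
      · exact absurd (eq_root_of_not_child hc0 hc1 hv hv0 hv1)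
          (fun h => hvF (h ▸ Set.mem_insert _ _))

end BBaux

namespace BBaux

variable {D : ℕ}

attribute [local instance] Classical.propDecidable

lemma ncard_single_ite (S : Set (Vt D)) (l0 : Vt D) :
    (S ∩ {l0}).ncard = (if l0 ∈ S then 1 else 0) := by
  by_cases h : l0 ∈ S
  · rw [if_pos h]
    have : S ∩ {l0} = {l0} := by
      ext v; simp only [Set.mem_inter_iff, Set.mem_singleton_iff]
      exact ⟨fun ⟨_, h2⟩ => h2, fun h2 => ⟨h2 ▸ h, h2⟩⟩
    rw [this, Set.ncard_singleton]
  · rw [if_neg h]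
    have : S ∩ {l0} = ∅ := by
      ext v; simp only [Set.mem_inter_iff, Set.mem_singleton_iff, Set.mem_empty_iff_false,
        iff_false, not_and]
      rintro hv rfl; exact h hv
    rw [this, Set.ncard_empty]

lemma ncard_split {l0 c0 c1 : Vt D} (hc0 : c0.1 = (0 : Fin 2) :: l0.1)
    (hc1 : c1.1 = (1 : Fin 2) :: l0.1) (S : Set (Vt D)) :
    (S ∩ Sub c0).ncard + (S ∩ Sub c1).ncard + (if l0 ∈ S then 1 else 0)
      ≤ (S ∩ Sub l0).ncard := by
  have hdis := Sub_disjoint hc0 hc1 (by decide)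
  have hsub : (S ∩ Sub c0) ∪ (S ∩ Sub c1) ∪ (S ∩ {l0}) ⊆ S ∩ Sub l0 := by
    rintro v ((⟨h1, h2⟩ | ⟨h1, h2⟩) | ⟨h1, h2⟩)
    · exact ⟨h1, Sub_subset (child_suffix hc0) h2⟩
    · exact ⟨h1, Sub_subset (child_suffix hc1) h2⟩
    · rcases h2 with rfl; exact ⟨h1, self_mem_Sub v⟩
  have hd1 : Disjoint (S ∩ Sub c0) (S ∩ Sub c1) :=
    (hdis.mono (Set.inter_subset_right) (Set.inter_subset_right))
  have hd2 : Disjoint ((S ∩ Sub c0) ∪ (S ∩ Sub c1)) (S ∩ {l0}) := by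
    rw [Set.disjoint_left]
    rintro v (⟨_, h2⟩ | ⟨_, h2⟩) ⟨_, h4⟩ <;> rcases h4 with rfl
    · exact root_not_mem_child_Sub hc0 h2
    · exact root_not_mem_child_Sub hc1 h2
  calc (S ∩ Sub c0).ncard + (S ∩ Sub c1).ncard + (if l0 ∈ S then 1 else 0)
      = ((S ∩ Sub c0) ∪ (S ∩ Sub c1) ∪ (S ∩ {l0})).ncard := by
        rw [Set.ncard_union_eq hd2 (Set.toFinite _) (Set.toFinite _),
          Set.ncard_union_eq hd1 (Set.toFinite _) (Set.toFinite _), ncard_single_ite]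
    _ ≤ (S ∩ Sub l0).ncard := Set.ncard_le_ncard hsub (Set.toFinite _)

def Avoid (F S : Set (Vt D)) : Prop := ∀ v ∈ F, v ∉ S

def NoAD (l0 : Vt D) (S : Set (Vt D)) : Prop :=
  ¬∃ F, (typeA l0 F ∨ typeD l0 F) ∧ Avoid F S
def NoB (l0 : Vt D) (S : Set (Vt D)) : Prop := ¬∃ F, typeB l0 F ∧ Avoid F S
def NoBC (l0 : Vt D) (S : Set (Vt D)) : Prop :=
  ¬∃ F, (typeB l0 F ∨ typeC l0 F) ∧ Avoid F S
def NoABD (l0 : Vt D) (S : Set (Vt D)) : Prop :=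
  ¬∃ F, (typeA l0 F ∨ typeB l0 F ∨ typeD l0 F) ∧ Avoid F S
def NoABCD (l0 : Vt D) (S : Set (Vt D)) : Prop :=
  ¬∃ F, (typeA l0 F ∨ typeB l0 F ∨ typeC l0 F) ∧ Avoid F S

lemma combineABD {l0 : Vt D} {S : Set (Vt D)} (h1 : NoAD l0 S) (h2 : NoB l0 S) :
    NoABD l0 S := by
  rintro ⟨F, (hF | hF | hF), hav⟩
  · exact h1 ⟨F, Or.inl hF, hav⟩
  · exact h2 ⟨F, hF, hav⟩
  · exact h1 ⟨F, Or.inr hF, hav⟩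

lemma combineABCD {l0 : Vt D} {S : Set (Vt D)} (h1 : NoAD l0 S) (h2 : NoBC l0 S) :
    NoABCD l0 S := by
  rintro ⟨F, (hF | hF | hF), hav⟩
  · exact h1 ⟨F, Or.inl hF, hav⟩
  · exact h2 ⟨F, Or.inl hF, hav⟩
  · exact h2 ⟨F, Or.inr hF, hav⟩

lemma NoBC_NoB {l0 : Vt D} {S : Set (Vt D)} (h : NoBC l0 S) : NoB l0 S :=
  fun ⟨F, hF, hav⟩ => h ⟨F, Or.inl hF, hav⟩

lemma Sub_leaf {l0 : Vt D} (h : l0.1.length = D) : Sub l0 = {l0} := by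
  ext v
  simp only [Set.mem_singleton_iff]
  constructor
  · intro hv
    have h1 := hv.length_le
    have h2 := v.2
    exact (Subtype.ext (hv.eq_of_length (by omega))).symm
  · rintro rfl; exact self_mem_Sub _

lemma typeB_singleton {l0 : Vt D} (h : l0.1.length = D) : typeB l0 {l0} := by
  refine ⟨by rw [Sub_leaf h], rfl, ?_⟩
  intro v hv hvF
  rw [Sub_leaf h] at hv
  exact absurd hv hvF

/-- The main lower-bound induction. -/
lemma lower_main : ∀ j : ℕ, ∀ l0 : Vt D, l0.1.length + j = D → ∀ S : Set (Vt D),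
    (NoAD l0 S → cB j ≤ (S ∩ Sub l0).ncard) ∧
    (NoABD l0 S → cC j ≤ (S ∩ Sub l0).ncard) ∧
    (NoABCD l0 S → cW j ≤ (S ∩ Sub l0).ncard) := by
  intro j
  induction j with
  | zero =>
    intro l0 hlen S
    have hmem : NoABD l0 S ∨ NoABCD l0 S → l0 ∈ S := by
      intro h
      by_contra hS
      have hB : typeB l0 {l0} := typeB_singleton (by omega)
      have hav : Avoid {l0} S := by rintro v rfl; exact hS
      rcases h with h | h
      · exact h ⟨{l0}, Or.inr (Or.inl hB), hav⟩
      · exact h ⟨{l0}, Or.inr (Or.inl hB), hav⟩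
    have hcard : l0 ∈ S → 1 ≤ (S ∩ Sub l0).ncard := by
      intro hS
      rw [Sub_leaf (by omega)]
      rw [ncard_single_ite, if_pos hS]
    exact ⟨fun _ => by rw [cB_zero]; omega,
      fun h => by rw [cC_zero]; exact hcard (hmem (Or.inl h)),
      fun h => by rw [cW_zero]; exact hcard (hmem (Or.inr h))⟩
  | succ j ih =>
    intro l0 hlen S
    have hllt : l0.1.length < D := by omega
    set c0 : Vt D := ⟨(0 : Fin 2) :: l0.1, by simpa using hllt⟩ with hc0def
    set c1 : Vt D := ⟨(1 : Fin 2) :: l0.1, by simpa using hllt⟩ with hc1def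
    have hc0 : c0.1 = (0 : Fin 2) :: l0.1 := rfl
    have hc1 : c1.1 = (1 : Fin 2) :: l0.1 := rfl
    have hlen0 : c0.1.length + j = D := by simp [hc0]; omega
    have hlen1 : c1.1.length + j = D := by simp [hc1]; omega
    obtain ⟨ih0AD, ih0ABD, ih0ABCD⟩ := ih c0 hlen0 S
    obtain ⟨ih1AD, ih1ABD, ih1ABCD⟩ := ih c1 hlen1 S
    have hsplit := ncard_split hc0 hc1 S
    have hbc := cB_le_cC j
    have hcw : cW j = cB j + 1 := rfl
    -- abbreviations
    set s0 := (S ∩ Sub c0).ncard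
    set s1 := (S ∩ Sub c1).ncard
    refine ⟨?_, ?_, ?_⟩
    · -- kill {A, D}
      intro h
      have hAD0 : NoAD c0 S := fun ⟨F, hF, hav⟩ => h ⟨F, Or.inl (lift_AD_A hc0 hF), hav⟩
      have hAD1 : NoAD c1 S := fun ⟨F, hF, hav⟩ => h ⟨F, Or.inl (lift_AD_A hc1 hF), hav⟩
      have hBor : NoB c0 S ∨ NoB c1 S := by
        by_cases hB0 : NoB c0 S
        · exact Or.inl hB0
        · refine Or.inr (fun ⟨F1, hF1, hav1⟩ => ?_)
          obtain ⟨F0, hF0, hav0⟩ := not_not.mp hB0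
          refine h ⟨F0 ∪ F1, Or.inr (lift_BB_D hc0 hc1 hF0 hF1), ?_⟩
          rintro v (hv | hv)
          · exact hav0 v hv
          · exact hav1 v hv
      rw [cB_succ]
      rcases hBor with hB | hB
      · have h0 := ih0ABD (combineABD hAD0 hB)
        have h1 := ih1AD hAD1
        omega
      · have h0 := ih0AD hAD0
        have h1 := ih1ABD (combineABD hAD1 hB)
        omega
    · -- kill {A, B, D}
      intro h
      have hAD0 : NoAD c0 S := fun ⟨F, hF, hav⟩ => h ⟨F, Or.inl (lift_AD_A hc0 hF), hav⟩
      have hAD1 : NoAD c1 S := fun ⟨F, hF, hav⟩ => h ⟨F, Or.inl (lift_AD_A hc1 hF), hav⟩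
      have hBor : NoB c0 S ∨ NoB c1 S := by
        by_cases hB0 : NoB c0 S
        · exact Or.inl hB0
        · refine Or.inr (fun ⟨F1, hF1, hav1⟩ => ?_)
          obtain ⟨F0, hF0, hav0⟩ := not_not.mp hB0
          refine h ⟨F0 ∪ F1, Or.inr (Or.inr (lift_BB_D hc0 hc1 hF0 hF1)), ?_⟩
          rintro v (hv | hv)
          · exact hav0 v hv
          · exact hav1 v hv
      have hBl0 : l0 ∈ S ∨ NoBC c0 S ∨ NoBC c1 S := by
        by_cases hS : l0 ∈ S
        · exact Or.inl hS
        by_cases hbc0 : NoBC c0 S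
        · exact Or.inr (Or.inl hbc0)
        refine Or.inr (Or.inr (fun ⟨F1, hF1, hav1⟩ => ?_))
        obtain ⟨F0, hF0, hav0⟩ := not_not.mp hbc0
        refine h ⟨insert l0 (F0 ∪ F1), Or.inr (Or.inl (lift_B hc0 hc1 hF0 hF1)), ?_⟩
        rintro v (rfl | hv | hv)
        · exact hS
        · exact hav0 v hv
        · exact hav1 v hv
      rw [cC_succ, cW]
      rcases hBor with hB | hB
      · have h0 := ih0ABD (combineABD hAD0 hB)
        rcases hBl0 with hS | hbc | hbc
        · have h1 := ih1AD hAD1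
          rw [if_pos hS] at hsplit
          omega
        · have h0' := ih0ABCD (combineABCD hAD0 hbc)
          have h1 := ih1AD hAD1
          omega
        · have h1 := ih1ABCD (combineABCD hAD1 hbc)
          omega
      · have h1 := ih1ABD (combineABD hAD1 hB)
        rcases hBl0 with hS | hbc | hbc
        · have h0 := ih0AD hAD0
          rw [if_pos hS] at hsplit
          omega
        · have h0 := ih0ABCD (combineABCD hAD0 hbc)
          omega
        · have h1' := ih1ABCD (combineABCD hAD1 hbc)
          have h0 := ih0AD hAD0
          omega
    · -- kill {A, B, C}
      intro h
      have hAD0 : NoAD c0 S := fun ⟨F, hF, hav⟩ => h ⟨F, Or.inl (lift_AD_A hc0 hF), hav⟩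
      have hAD1 : NoAD c1 S := fun ⟨F, hF, hav⟩ => h ⟨F, Or.inl (lift_AD_A hc1 hF), hav⟩
      have hB0 : NoB c0 S := fun ⟨F, hF, hav⟩ =>
        h ⟨F, Or.inr (Or.inr (lift_B_C hc0 hF)), hav⟩
      have hB1 : NoB c1 S := fun ⟨F, hF, hav⟩ =>
        h ⟨F, Or.inr (Or.inr (lift_B_C hc1 hF)), hav⟩
      have h0 := ih0ABD (combineABD hAD0 hB0)
      have h1 := ih1ABD (combineABD hAD1 hB1)
      have hBl0 : l0 ∈ S ∨ NoBC c0 S ∨ NoBC c1 S := by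
        by_cases hS : l0 ∈ S
        · exact Or.inl hS
        by_cases hbc0 : NoBC c0 S
        · exact Or.inr (Or.inl hbc0)
        refine Or.inr (Or.inr (fun ⟨F1, hF1, hav1⟩ => ?_))
        obtain ⟨F0, hF0, hav0⟩ := not_not.mp hbc0
        refine h ⟨insert l0 (F0 ∪ F1), Or.inr (Or.inl (lift_B hc0 hc1 hF0 hF1)), ?_⟩
        rintro v (rfl | hv | hv)
        · exact hS
        · exact hav0 v hv
        · exact hav1 v hv
      rw [cW_succ, cW]
      rcases hBl0 with hS | hbc | hbc
      · rw [if_pos hS] at hsplit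
        omega
      · have h0' := ih0ABCD (combineABCD hAD0 hbc)
        omega
      · have h1' := ih1ABCD (combineABCD hAD1 hbc)
        omega

end BBaux

namespace BBaux

variable {D : ℕ}

lemma fin2_eq_of_ne {a b c : Fin 2} (h1 : a ≠ c) (h2 : b ≠ c) : a = b := by
  rcases fin2_cases a with rfl | rfl <;> rcases fin2_cases b with rfl | rfl <;>
    rcases fin2_cases c with rfl | rfl <;> simp_all

lemma par_child {l0 c : Vt D} {x : Fin 2} (hc : c.1 = x :: l0.1) : par c = l0 :=
  Subtype.ext (by show c.1.tail = l0.1; rw [hc, List.tail_cons])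

lemma Sub_tricho {l0 c0 c1 v : Vt D} (hc0 : c0.1 = (0 : Fin 2) :: l0.1)
    (hc1 : c1.1 = (1 : Fin 2) :: l0.1) (hv : v ∈ Sub l0) :
    v = l0 ∨ v ∈ Sub c0 ∨ v ∈ Sub c1 := by
  rcases mem_Sub_cases hv with rfl | ⟨x, hx⟩
  · exact Or.inl rfl
  · rcases fin2_cases x with rfl | rfl
    · exact Or.inr (Or.inl (show v ∈ Sub c0 from by rw [Sub, Set.mem_setOf_eq, hc0]; exact hx))
    · exact Or.inr (Or.inr (show v ∈ Sub c1 from by rw [Sub, Set.mem_setOf_eq, hc1]; exact hx))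

/-- If the whole subtree of a child is reached, the child forces its parent. -/
lemma force_parent {S : Set (Vt D)} {l0 c : Vt D} {x : Fin 2} (hc : c.1 = x :: l0.1)
    (hcov : ∀ v ∈ Sub c, PropReach (BalancedTree 2 D) S v) :
    PropReach (BalancedTree 2 D) S l0 := by
  apply PropReach.step (hcov c (self_mem_Sub c)) (adj_up hc)
  intro w hadj hne
  rcases hadj with ⟨y, hy⟩ | ⟨y, hy⟩
  · rw [hc] at hy
    exact absurd (Subtype.ext (show w.1 = l0.1 from by injection hy with h1 h2; exact h2.symm)) hne
  · exact hcov w ⟨[y], by simp [hy]⟩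

/-- A reached parent with one reached child and reached own parent forces the other child. -/
lemma force_child {S : Set (Vt D)} {l0 ca cb : Vt D} {xa xb : Fin 2}
    (hca : ca.1 = xa :: l0.1) (hcb : cb.1 = xb :: l0.1) (hne : xa ≠ xb)
    (hl0 : PropReach (BalancedTree 2 D) S l0)
    (ha : PropReach (BalancedTree 2 D) S ca)
    (hpar : PropReach (BalancedTree 2 D) S (par l0)) :
    PropReach (BalancedTree 2 D) S cb := by
  apply PropReach.step hl0 (adj_down hcb)
  intro w hadj hwne
  rcases hadj with ⟨y, hy⟩ | ⟨y, hy⟩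
  · have : w = par l0 := Subtype.ext (show w.1 = l0.1.tail from by rw [hy, List.tail_cons])
    exact this ▸ hpar
  · by_cases hyb : y = xb
    · exact absurd (Subtype.ext (show w.1 = cb.1 from by rw [hy, hcb, hyb])) hwne
    · have hya : y = xa := fin2_eq_of_ne hyb hne
      have : w = ca := Subtype.ext (show w.1 = ca.1 from by rw [hy, hca, hya])
      exact this ▸ ha

/-- The main upper-bound induction. -/
lemma upper_main : ∀ j : ℕ, ∀ l0 : Vt D, l0.1.length + j = D →
    (∃ S : Set (Vt D), S ⊆ Sub l0 ∧ (∀ v ∈ S, v.1.length = D) ∧ S.ncard = cW j ∧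
       ∀ v ∈ Sub l0, PropReach (BalancedTree 2 D) S v) ∧
    (∃ S : Set (Vt D), S ⊆ Sub l0 ∧ (∀ v ∈ S, v.1.length = D) ∧ S.ncard = cC j ∧
       PropReach (BalancedTree 2 D) S l0 ∧
       ∀ v ∈ Sub l0, PropReach (BalancedTree 2 D) (insert (par l0) S) v) ∧
    (∃ S : Set (Vt D), S ⊆ Sub l0 ∧ (∀ v ∈ S, v.1.length = D) ∧ S.ncard = cB j ∧
       ∀ v ∈ Sub l0, PropReach (BalancedTree 2 D) (insert l0 (insert (par l0) S)) v) := by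
  intro j
  induction j with
  | zero =>
    intro l0 hlen
    have hleafset : Sub l0 = {l0} := Sub_leaf (by omega)
    have hlf : ∀ v ∈ ({l0} : Set (Vt D)), v.1.length = D := by
      rintro v rfl; omega
    refine ⟨⟨{l0}, by rw [hleafset], hlf, Set.ncard_singleton _, ?_⟩,
      ⟨{l0}, by rw [hleafset], hlf, Set.ncard_singleton _, PropReach.base rfl, ?_⟩,
      ⟨∅, Set.empty_subset _, by simp, Set.ncard_empty _, ?_⟩⟩
    · intro v hv; rw [hleafset] at hv; rcases hv with rfl
      exact PropReach.base rfl
    · intro v hv; rw [hleafset] at hv; rcases hv with rfl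
      exact PropReach.base (Set.mem_insert_of_mem _ rfl)
    · intro v hv; rw [hleafset] at hv; rcases hv with rfl
      exact PropReach.base (Set.mem_insert _ _)
  | succ j ih =>
    intro l0 hlen
    have hllt : l0.1.length < D := by omega
    set c0 : Vt D := ⟨(0 : Fin 2) :: l0.1, by simpa using hllt⟩ with hc0def
    set c1 : Vt D := ⟨(1 : Fin 2) :: l0.1, by simpa using hllt⟩ with hc1def
    have hc0 : c0.1 = (0 : Fin 2) :: l0.1 := rfl
    have hc1 : c1.1 = (1 : Fin 2) :: l0.1 := rfl
    have hlen0 : c0.1.length + j = D := by simp [hc0]; omega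
    have hlen1 : c1.1.length + j = D := by simp [hc1]; omega
    obtain ⟨⟨SW0, hW0sub, hW0leaf, hW0card, hW0cov⟩,
            ⟨SC0, hC0sub, hC0leaf, hC0card, hC0root, hC0cov⟩, _⟩ := ih c0 hlen0
    obtain ⟨_, ⟨SC1, hC1sub, hC1leaf, hC1card, hC1root, hC1cov⟩,
            ⟨SB1, hB1sub, hB1leaf, hB1card, hB1cov⟩⟩ := ih c1 hlen1
    have hdis := Sub_disjoint hc0 hc1 (by decide)
    have hsub0 : Sub c0 ⊆ Sub l0 := Sub_subset (child_suffix hc0)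
    have hsub1 : Sub c1 ⊆ Sub l0 := Sub_subset (child_suffix hc1)
    have hpc0 : par c0 = l0 := par_child hc0
    have hpc1 : par c1 = l0 := par_child hc1
    have hcard : ∀ {X Y : Set (Vt D)}, X ⊆ Sub c0 → Y ⊆ Sub c1 →
        (X ∪ Y).ncard = X.ncard + Y.ncard := by
      intro X Y hX hY
      exact Set.ncard_union_eq (hdis.mono hX hY) (Set.toFinite _) (Set.toFinite _)
    refine ⟨?_, ?_, ?_⟩
    · -- W-configuration: SW0 ∪ SC1
      refine ⟨SW0 ∪ SC1, Set.union_subset (hW0sub.trans hsub0) (hC1sub.trans hsub1),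
        ?_, ?_, ?_⟩
      · rintro v (hv | hv); exacts [hW0leaf v hv, hC1leaf v hv]
      · rw [hcard hW0sub hC1sub, hW0card, hC1card, cW_succ]
      · set S := SW0 ∪ SC1 with hS
        have cov0 : ∀ v ∈ Sub c0, PropReach (BalancedTree 2 D) S v :=
          fun v hv => PropReach.mono Set.subset_union_left (hW0cov v hv)
        have hl0 : PropReach (BalancedTree 2 D) S l0 := force_parent hc0 cov0
        have cov1 : ∀ v ∈ Sub c1, PropReach (BalancedTree 2 D) S v := by
          intro v hv
          refine PropReach.graft ?_ (hC1cov v hv)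
          rintro s (rfl | hs)
          · rw [hpc1]; exact hl0
          · exact PropReach.base (Or.inr hs)
        intro v hv
        rcases Sub_tricho hc0 hc1 hv with rfl | hv | hv
        exacts [hl0, cov0 v hv, cov1 v hv]
    · -- C-configuration: SW0 ∪ SB1
      refine ⟨SW0 ∪ SB1, Set.union_subset (hW0sub.trans hsub0) (hB1sub.trans hsub1),
        ?_, ?_, ?_, ?_⟩
      · rintro v (hv | hv); exacts [hW0leaf v hv, hB1leaf v hv]
      · rw [hcard hW0sub hB1sub, hW0card, hB1card, cC_succ]
      · exact force_parent hc0 (fun v hv =>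
          PropReach.mono Set.subset_union_left (hW0cov v hv))
      · set S := SW0 ∪ SB1 with hS
        set S' := insert (par l0) S with hS'
        have hSS' : S ⊆ S' := Set.subset_insert _ _
        have cov0 : ∀ v ∈ Sub c0, PropReach (BalancedTree 2 D) S' v :=
          fun v hv => PropReach.mono (Set.subset_union_left.trans hSS') (hW0cov v hv)
        have hl0' : PropReach (BalancedTree 2 D) S' l0 := force_parent hc0 cov0
        have hc1' : PropReach (BalancedTree 2 D) S' c1 :=
          force_child hc0 hc1 (by decide) hl0' (cov0 c0 (self_mem_Sub c0))
            (PropReach.base (Set.mem_insert _ _))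
        have cov1 : ∀ v ∈ Sub c1, PropReach (BalancedTree 2 D) S' v := by
          intro v hv
          refine PropReach.graft ?_ (hB1cov v hv)
          rintro s (rfl | rfl | hs)
          · exact hc1'
          · rw [hpc1]; exact hl0'
          · exact PropReach.base (hSS' (Or.inr hs))
        intro v hv
        rcases Sub_tricho hc0 hc1 hv with rfl | hv | hv
        exacts [hl0', cov0 v hv, cov1 v hv]
    · -- B-configuration: SC0 ∪ SB1
      refine ⟨SC0 ∪ SB1, Set.union_subset (hC0sub.trans hsub0) (hB1sub.trans hsub1),
        ?_, ?_, ?_⟩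
      · rintro v (hv | hv); exacts [hC0leaf v hv, hB1leaf v hv]
      · rw [hcard hC0sub hB1sub, hC0card, hB1card, cB_succ]
      · set S := SC0 ∪ SB1 with hS
        set S' := insert l0 (insert (par l0) S) with hS'
        have hSS' : S ⊆ S' := (Set.subset_insert _ _).trans (Set.subset_insert _ _)
        have hl0' : PropReach (BalancedTree 2 D) S' l0 := PropReach.base (Set.mem_insert _ _)
        have hpar' : PropReach (BalancedTree 2 D) S' (par l0) :=
          PropReach.base (Set.mem_insert_of_mem _ (Set.mem_insert _ _))
        have hc0' : PropReach (BalancedTree 2 D) S' c0 :=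
          PropReach.mono (Set.subset_union_left.trans hSS') hC0root
        have hc1' : PropReach (BalancedTree 2 D) S' c1 :=
          force_child hc0 hc1 (by decide) hl0' hc0' hpar'
        have cov0 : ∀ v ∈ Sub c0, PropReach (BalancedTree 2 D) S' v := by
          intro v hv
          refine PropReach.graft ?_ (hC0cov v hv)
          rintro s (rfl | hs)
          · rw [hpc0]; exact hl0'
          · exact PropReach.base (hSS' (Or.inl hs))
        have cov1 : ∀ v ∈ Sub c1, PropReach (BalancedTree 2 D) S' v := by
          intro v hv
          refine PropReach.graft ?_ (hB1cov v hv)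
          rintro s (rfl | rfl | hs)
          · exact hc1'
          · rw [hpc1]; exact hl0'
          · exact PropReach.base (hSS' (Or.inr hs))
        intro v hv
        rcases Sub_tricho hc0 hc1 hv with rfl | hv | hv
        exacts [hl0', cov0 v hv, cov1 v hv]

end BBaux

namespace BBaux

variable {D : ℕ}

def root (D : ℕ) : Vt D := ⟨[], by simp⟩

lemma Sub_root : Sub (root D) = Set.univ :=
  Set.eq_univ_of_forall (fun v => List.nil_suffix)

lemma root_len : (root D).1.length + D = D := by simp [root]

/-- Existence of a propagating set of leaves of cardinality `cC D`. -/
lemma upper_bound_final :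
    ∃ S : Set (Vt D), (∀ v ∈ S, v.1.length = D) ∧ S.ncard = cC D ∧
      Propagates (BalancedTree 2 D) S := by
  obtain ⟨_, ⟨S, hsub, hleaf, hcard, hroot, hcov⟩, _⟩ := upper_main D (root D) root_len
  refine ⟨S, hleaf, hcard, ?_⟩
  intro v
  have hv : v ∈ Sub (root D) := List.nil_suffix
  refine PropReach.graft ?_ (hcov v hv)
  rintro s (rfl | hs)
  · exact PropReach.mono (fun _ h => h) hroot
  · exact PropReach.base hs

/-- Any propagating set has cardinality at least `cC D`. -/
lemma lower_bound_final (S : Set (Vt D)) (hprop : Propagates (BalancedTree 2 D) S) :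
    cC D ≤ S.ncard := by
  have h := (lower_main D (root D) root_len S).2.1
  rw [Sub_root, Set.inter_univ] at h
  apply h
  rintro ⟨F, hF, hav⟩
  have hne : F.Nonempty := by
    rcases hF with h | h | h
    · exact h.2.1
    · exact ⟨root D, h.2.1⟩
    · obtain ⟨z, hz, _⟩ := h.2.2.1 0
      exact ⟨z, hz⟩
  have hgood : ∀ v, v ∉ F → goodAt F v := by
    intro v hv
    have hvSub : v ∈ Sub (root D) := List.nil_suffix
    rcases hF with h | h | h
    · exact h.2.2.2.2 v hvSub hv
    · exact h.2.2 v hvSub hv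
    · exact h.2.2.2 v hvSub hv
  obtain ⟨z, hz⟩ := hne
  exact reach_not_mem_fort hav hgood z (hprop z) hz

lemma propNum_eq : propNum (BalancedTree 2 D) = cC D := by
  obtain ⟨S, _, hcard, hprop⟩ := upper_bound_final (D := D)
  refine le_antisymm (Nat.sInf_le ⟨S, hcard, hprop⟩) (le_csInf ⟨_, S, hcard, hprop⟩ ?_)
  rintro n ⟨S', hcard', hprop'⟩
  exact hcard' ▸ lower_bound_final S' hprop'

lemma leafInf_eq :
    sInf {n : ℕ | ∃ S : Set (Vt D), (∀ v ∈ S, v.1.length = D) ∧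
        S.ncard = n ∧ Propagates (BalancedTree 2 D) S} = cC D := by
  obtain ⟨S, hleaf, hcard, hprop⟩ := upper_bound_final (D := D)
  refine le_antisymm (Nat.sInf_le ⟨S, hleaf, hcard, hprop⟩)
    (le_csInf ⟨_, S, hleaf, hcard, hprop⟩ ?_)
  rintro n ⟨S', _, hcard', hprop'⟩
  exact hcard' ▸ lower_bound_final S' hprop'

end BBaux


/-- For `k ≥ 1`, the balanced binary tree with `k` levels (depth `k - 1`,
`2^k - 1` vertices) satisfies `π(T_{2,k}) = (2^k + (-1)^(k-1))/3` (the Jacobsthal number),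
and the minimum is attained by sets consisting only of leaves (words of length `k - 1`). -/
theorem propNum_balancedBinaryTree (k : ℕ) (hk : 1 ≤ k) :
    (3 : ℤ) * (propNum (BalancedTree 2 (k - 1)) : ℤ) = 2 ^ k + (-1) ^ (k - 1) ∧
    sInf {n : ℕ | ∃ S : Set {l : List (Fin 2) // l.length ≤ k - 1},
        (∀ v ∈ S, (v : {l : List (Fin 2) // l.length ≤ k - 1}).1.length = k - 1) ∧
        S.ncard = n ∧ Propagates (BalancedTree 2 (k - 1)) S}
      = propNum (BalancedTree 2 (k - 1)) := by

  obtain ⟨D, rfl⟩ : ∃ D, k = D + 1 := ⟨k - 1, by omega⟩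
  constructor
  · show (3 : ℤ) * (propNum (BalancedTree 2 D) : ℤ) = 2 ^ (D + 1) + (-1) ^ D
    rw [BBaux.propNum_eq]
    exact (BBaux.seq_closed D).1
  · show sInf {n : ℕ | ∃ S : Set (BBaux.Vt D), (∀ v ∈ S, v.1.length = D) ∧
        S.ncard = n ∧ Propagates (BalancedTree 2 D) S} = propNum (BalancedTree 2 D)
    rw [BBaux.propNum_eq, BBaux.leafInf_eq]
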